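/- Let n ≥ 2 and M ≥ n be integers. Let P : Fin n → ℝ be an antitone quantum distribution, i.e. P(i) = p(i)/M with positive integers p(i) summing to M and P(i) ≥ P(j) for i ≤ j, and assume the last value is the strict minimum: P(i) > P(n−1) for all i < n−1. Let U : Fin n → ℝ assign U(i) = 1/M for i < n−1 and U(n−1) = (M−n+1)/M. Then for every quantum distribution Q : Fin n → ℝ with the same quantum (Q(i) = q(i)/M, q(i) positive integers summing to M) such that Q ≠ U, the strict inequality KL(P‖Q) < KL(P‖U) holds. -/

import Mathlib

lemma prod_add_card_ge {ι : Type*} [DecidableEq ι] (s : Finset ι) (q : ι → ℕ)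
    (hq : ∀ i ∈ s, 1 ≤ q i) : ∑ i ∈ s, q i + 1 ≤ ∏ i ∈ s, q i + s.card := by
  induction s using Finset.induction_on with
  | empty => simp
  | @insert a s ha ih =>
    rw [Finset.sum_insert ha, Finset.prod_insert ha, Finset.card_insert_of_notMem ha]
    have h1 : 1 ≤ q a := hq a (Finset.mem_insert_self a s)
    have h2 : ∑ i ∈ s, q i + 1 ≤ ∏ i ∈ s, q i + s.card :=
      ih (fun i hi => hq i (Finset.mem_insert_of_mem hi))
    have h3 : 1 ≤ ∏ i ∈ s, q i :=
      Finset.one_le_prod' (fun i hi => hq i (Finset.mem_insert_of_mem hi))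
    nlinarith



/-- Kullback–Leibler divergence (base-2 logarithm) between two finite distributions. -/
noncomputable def KL {n : ℕ} (P Q : Fin n → ℝ) : ℝ :=
  ∑ i, P i * Real.logb 2 (P i / Q i)

/-- Uniqueness of the maximizer: if the last value of the antitone quantum distribution `P`
is its strict minimum, then `U` is the unique maximizer of the KL divergence from `P`:
every other quantum distribution `Q ≠ U` with the same quantum has strictly smaller
divergence. -/
theorem kl_lt_kl_max_of_ne (n M : ℕ) (hn : 2 ≤ n) (hM : n ≤ M)
    (p : Fin n → ℕ) (hp : ∀ i, 0 < p i) (hpsum : ∑ i, p i = M)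
    (P : Fin n → ℝ) (hP : ∀ i, P i = (p i : ℝ) / (M : ℝ))
    (hanti : Antitone P)
    (hmin : ∀ i : Fin n, (i : ℕ) < n - 1 → P ⟨n - 1, by omega⟩ < P i)
    (U : Fin n → ℝ)
    (hU1 : ∀ i : Fin n, (i : ℕ) < n - 1 → U i = 1 / (M : ℝ))
    (hU2 : U ⟨n - 1, by omega⟩ = ((M : ℝ) - (n : ℝ) + 1) / (M : ℝ))
    (q : Fin n → ℕ) (hq : ∀ i, 0 < q i) (hqsum : ∑ i, q i = M)
    (Q : Fin n → ℝ) (hQ : ∀ i, Q i = (q i : ℝ) / (M : ℝ))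
    (hQU : Q ≠ U) :
    KL P Q < KL P U := by
  have hMpos : 0 < M := by omega
  have hM0 : (0:ℝ) < (M:ℝ) := by exact_mod_cast hMpos
  set last : Fin n := ⟨n - 1, by omega⟩ with hlast
  have hival : ∀ i : Fin n, (i:ℕ) ≤ n - 1 := fun i => by have := i.isLt; omega
  -- M - n + 1 ≥ 1
  have hK1 : 1 ≤ M - (n-1) := by omega
  have hKcast : ((M - (n-1) : ℕ) : ℝ) = (M:ℝ) - n + 1 := by
    rw [Nat.cast_sub (by omega : n - 1 ≤ M), Nat.cast_sub (by omega : 1 ≤ n)]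
    push_cast
    ring
  have hKpos : (1:ℝ) ≤ (M:ℝ) - n + 1 := by
    rw [← hKcast]; exact_mod_cast hK1
  -- there is j < n-1 with 2 ≤ q j
  obtain ⟨j, hjlt, hqj2⟩ : ∃ j : Fin n, (j:ℕ) < n - 1 ∧ 2 ≤ q j := by
    by_contra hcon
    push_neg at hcon
    apply hQU
    have hq1 : ∀ i : Fin n, (i:ℕ) < n - 1 → q i = 1 := fun i hi => by
      have := hcon i hi; have := hq i; omega
    have hsum' : ∑ i, q i = ∑ i ∈ Finset.univ.erase last, q i + q last :=
      (Finset.sum_erase_add _ _ (Finset.mem_univ last)).symm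
    have herase : ∀ i ∈ Finset.univ.erase last, q i = 1 := by
      intro i hi
      have hne : i ≠ last := (Finset.mem_erase.mp hi).1
      have : (i:ℕ) < n - 1 := by
        rcases lt_or_eq_of_le (hival i) with h | h
        · exact h
        · exact absurd (Fin.ext h) hne
      exact hq1 i this
    have hcard : (Finset.univ.erase last).card = n - 1 := by
      rw [Finset.card_erase_of_mem (Finset.mem_univ last)]
      simp
    have hqlast : q last = M - (n-1) := by
      rw [Finset.sum_congr rfl herase, Finset.sum_const, smul_eq_mul, mul_one, hcard] at hsum'
      omega
    funext i
    rcases lt_or_eq_of_le (hival i) with h | h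
    · rw [hQ i, hU1 i h, hq1 i h]; norm_num
    · have : i = last := Fin.ext h
      rw [this, hQ last, hU2, hqlast, hKcast]
  -- p last ≤ p i, and p last < p j
  have hple : ∀ i : Fin n, p last ≤ p i := by
    intro i
    have hle : i ≤ last := by
      rw [Fin.le_def]; exact hival i
    have := hanti hle
    rw [hP, hP] at this
    have := (div_le_div_iff_of_pos_right hM0).mp this
    exact_mod_cast this
  have hplt : p last < p j := by
    have := hmin j hjlt
    rw [hP, hP] at this
    have := (div_lt_div_iff_of_pos_right hM0).mp this
    exact_mod_cast this
  -- key inequality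
  have hprod : M - (n-1) ≤ ∏ i, q i := by
    have := prod_add_card_ge Finset.univ q (fun i _ => hq i)
    rw [hqsum] at this
    simp only [Finset.card_univ, Fintype.card_fin] at this
    omega
  have hlogq_nonneg : ∀ i : Fin n, 0 ≤ Real.log (q i) := fun i =>
    Real.log_nonneg (by exact_mod_cast hq i)
  have hsumlog : Real.log ((M:ℝ) - n + 1) ≤ ∑ i, Real.log (q i) := by
    rw [← Real.log_prod (fun i _ => by exact_mod_cast (hq i).ne')]
    apply Real.log_le_log (by linarith)
    rw [← hKcast, ← Nat.cast_prod]
    exact_mod_cast hprod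
  have hc0 : (0:ℝ) < (p last : ℝ) := by exact_mod_cast hp last
  have key : (p last : ℝ) * Real.log ((M:ℝ) - n + 1) < ∑ i, (p i : ℝ) * Real.log (q i) := by
    have h1 : ∑ i, (p last : ℝ) * Real.log (q i) + ((p j : ℝ) - p last) * Real.log (q j)
        ≤ ∑ i, (p i : ℝ) * Real.log (q i) := by
      have : ∀ i : Fin n, (p i : ℝ) * Real.log (q i)
          = (p last : ℝ) * Real.log (q i) + ((p i : ℝ) - p last) * Real.log (q i) := by
        intro i; ring
      rw [Finset.sum_congr rfl (fun i _ => this i), Finset.sum_add_distrib]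
      gcongr
      exact Finset.single_le_sum (f := fun i => ((p i : ℝ) - p last) * Real.log (q i))
        (fun i _ => mul_nonneg (sub_nonneg.mpr (by exact_mod_cast hple i)) (hlogq_nonneg i))
        (Finset.mem_univ j)
    have h2 : 0 < ((p j : ℝ) - p last) * Real.log (q j) := by
      apply mul_pos
      · have : (p last : ℝ) < p j := by exact_mod_cast hplt
        linarith
      · apply Real.log_pos; exact_mod_cast hqj2
    have h3 : (p last : ℝ) * Real.log ((M:ℝ) - n + 1) ≤ ∑ i, (p last : ℝ) * Real.log (q i) := by
      rw [← Finset.mul_sum]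
      exact mul_le_mul_of_nonneg_left hsumlog hc0.le
    linarith
  -- positivity facts
  have hPpos : ∀ i, 0 < P i := fun i => by
    rw [hP]; exact div_pos (by exact_mod_cast hp i) hM0
  have hQpos : ∀ i, 0 < Q i := fun i => by
    rw [hQ]; exact div_pos (by exact_mod_cast hq i) hM0
  have hUpos : ∀ i, 0 < U i := fun i => by
    rcases lt_or_eq_of_le (hival i) with h | h
    · rw [hU1 i h]; positivity
    · have : i = last := Fin.ext h
      rw [this, hU2]; apply div_pos (by linarith) hM0
  -- logs of Q and U
  have hlogQ : ∀ i : Fin n, Real.log (Q i) = Real.log (q i) - Real.log M := fun i => by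
    rw [hQ, Real.log_div (by exact_mod_cast (hq i).ne') hM0.ne']
  have hlogU : ∀ i : Fin n, (i:ℕ) < n - 1 → Real.log (U i) = - Real.log M := fun i hi => by
    rw [hU1 i hi, one_div, Real.log_inv]
  have hlogUlast : Real.log (U last) = Real.log ((M:ℝ) - n + 1) - Real.log M := by
    rw [hU2, Real.log_div (by linarith) hM0.ne']
  -- main sum inequality
  set e : Fin n → ℝ := fun i => if (i:ℕ) < n - 1 then 0 else (p i : ℝ) * Real.log ((M:ℝ) - n + 1) with he
  have hesum : ∑ i, e i = (p last : ℝ) * Real.log ((M:ℝ) - n + 1) := by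
    rw [Finset.sum_eq_single_of_mem last (Finset.mem_univ last)]
    · simp only [he]
      rw [if_neg]
      simp [hlast]
    · intro i _ hne
      have hi : (i:ℕ) < n - 1 := lt_of_le_of_ne (hival i) (fun h => hne (Fin.ext h))
      simp only [he]
      rw [if_pos hi]
  have main : ∑ i, P i * Real.log (P i / Q i) < ∑ i, P i * Real.log (P i / U i) := by
    rw [← sub_pos, ← Finset.sum_sub_distrib]
    have hterm : ∀ i : Fin n,
        P i * Real.log (P i / U i) - P i * Real.log (P i / Q i)
          = ((p i : ℝ) * Real.log (q i) - e i) / M := by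
      intro i
      rw [Real.log_div (hPpos i).ne' (hUpos i).ne', Real.log_div (hPpos i).ne' (hQpos i).ne']
      by_cases hi : (i:ℕ) < n - 1
      · rw [hlogQ i, hlogU i hi, hP i]
        simp only [he]
        rw [if_pos hi]
        ring
      · have hi' : i = last := by
          apply Fin.ext
          show (i:ℕ) = n - 1
          have := hival i
          omega
        rw [hi', hlogQ last, hlogUlast, hP last]
        simp only [he]
        rw [if_neg (by simp [hlast])]
        ring
    rw [Finset.sum_congr rfl (fun i _ => hterm i), ← Finset.sum_div, Finset.sum_sub_distrib,
      hesum]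
    apply div_pos _ hM0
    linarith
  -- conclude
  have hlog2 : (0:ℝ) < Real.log 2 := Real.log_pos (by norm_num)
  have hKL : ∀ R : Fin n → ℝ, KL P R = (∑ i, P i * Real.log (P i / R i)) / Real.log 2 := by
    intro R
    unfold KL
    rw [Finset.sum_div]
    refine Finset.sum_congr rfl (fun i _ => ?_)
    rw [Real.logb, mul_div_assoc]
  rw [hKL Q, hKL U]
  exact (div_lt_div_iff_of_pos_right hlog2).mpr main
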